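/- arXiv:1503.01086 — 7 statements merged into one kernel-verified Lean document; each statement's English description precedes it below -/
import Mathlib

section
/- For every integer a ≥ 1, the equation a_n = a has infinitely many solutions n; that is, the set {n ≥ 1 : a_n = a} is infinite. -/
open Finset Filter Asymptotics

/-- `a n` is the smallest positive integer such that `n + a n` is prime. -/
noncomputable def a (n : ℕ) : ℕ := sInf {k : ℕ | 0 < k ∧ (n + k).Prime}

/-- `p k` is the `k`-th prime (1-indexed, so `p 1 = 2`). -/
noncomputable def p (k : ℕ) : ℕ := Nat.nth Nat.Prime (k - 1)

theorem stmt_2 : ∀ A : ℕ, 1 ≤ A → {n : ℕ | 1 ≤ n ∧ a n = A}.Infinite := by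
  intro A hA
  apply Set.infinite_of_forall_exists_gt
  intro N
  set m : ℕ := N + A + 2 with hm
  have hmA : A ≤ m := by omega
  have hm2 : 2 ≤ m := by omega
  -- numbers m!+j for 2 ≤ j ≤ m are composite
  have comp : ∀ j, 2 ≤ j → j ≤ m → ¬ (m.factorial + j).Prime := by
    intro j hj2 hjm hp
    have hdvd : j ∣ m.factorial + j :=
      Dvd.dvd.add (Nat.dvd_factorial (by omega) hjm) dvd_rfl
    have hfac := Nat.factorial_pos m
    rcases (hp.eq_one_or_self_of_dvd j hdvd) with h | h <;> omega
  -- q : smallest prime ≥ m! + 2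
  obtain ⟨r, hr, hrp⟩ := Nat.exists_infinite_primes (m.factorial + 2)
  set S : Set ℕ := {r : ℕ | m.factorial + 2 ≤ r ∧ r.Prime} with hS
  have hne : S.Nonempty := ⟨r, hr, hrp⟩
  set q : ℕ := sInf S with hq
  have hqmem : q ∈ S := Nat.sInf_mem hne
  have hqmin : ∀ s < q, s ∉ S := fun s hs => Nat.notMem_of_lt_sInf hs
  obtain ⟨hqle, hqp⟩ := hqmem
  -- q ≥ m! + m + 1
  have hqbig : m.factorial + m + 1 ≤ q := by
    by_contra h
    push_neg at h
    exact comp (q - m.factorial) (by omega) (by omega)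
      (by have : m.factorial + (q - m.factorial) = q := by omega
          rw [this]; exact hqp)
  have hfacm : m ≤ m.factorial := Nat.self_le_factorial m
  refine ⟨q - A, ⟨by omega, ?_⟩, by omega⟩
  have hnA : q - A + A = q := by omega
  show sInf {k : ℕ | 0 < k ∧ (q - A + k).Prime} = A
  have hAmem : A ∈ {k : ℕ | 0 < k ∧ (q - A + k).Prime} := by
    refine ⟨hA, ?_⟩
    rw [hnA]; exact hqp
  refine le_antisymm (Nat.sInf_le hAmem) ?_
  have hmem := Nat.sInf_mem (⟨A, hAmem⟩ : Set.Nonempty _)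
  obtain ⟨hpos, hprime⟩ := hmem
  by_contra h
  push_neg at h
  have hlt : q - A + sInf {k : ℕ | 0 < k ∧ (q - A + k).Prime} < q := by omega
  exact (hqmin _ hlt) ⟨by omega, hprime⟩
end

section
/- For every prime n ≥ 3, the sum S_n = Σ_{i=1}^{n} a_i satisfies 2·S_n = 2·p_{π(n)+1} − p_{π(n)} + Σ_{k=1}^{π(n)−1} (p_{k+1} − p_k)^2. -/
open Finset Filter Asymptotics

private lemma infp : (setOf Nat.Prime).Infinite := Nat.infinite_setOf_prime

private lemma lt_nth_pc (i : ℕ) : i < Nat.nth Nat.Prime (Nat.primeCounting i) := by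
  by_contra h
  push_neg at h
  have h1 : Nat.count Nat.Prime (Nat.nth Nat.Prime (Nat.primeCounting i) + 1)
      ≤ Nat.count Nat.Prime (i + 1) := Nat.count_monotone _ (by omega)
  rw [Nat.count_succ] at h1
  rw [Nat.count_nth_of_infinite infp, if_pos (Nat.prime_nth_prime _)] at h1
  have : Nat.primeCounting i = Nat.count Nat.Prime (i + 1) := rfl
  omega

private lemma a_add (i : ℕ) : i + a i = Nat.nth Nat.Prime (Nat.primeCounting i) := by
  set N := Nat.nth Nat.Prime (Nat.primeCounting i) with hN
  have hlt : i < N := lt_nth_pc i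
  have hmem : N - i ∈ {k : ℕ | 0 < k ∧ (i + k).Prime} := by
    constructor
    · omega
    · have : i + (N - i) = N := by omega
      rw [this]; exact Nat.prime_nth_prime _
  have hlb : ∀ k ∈ {k : ℕ | 0 < k ∧ (i + k).Prime}, N - i ≤ k := by
    rintro k ⟨hk0, hkp⟩
    have h1 : Nat.primeCounting i ≤ Nat.count Nat.Prime (i + k) := by
      have : Nat.primeCounting i = Nat.count Nat.Prime (i + 1) := rfl
      rw [this]; exact Nat.count_monotone _ (by omega)
    have h2 : N ≤ Nat.nth Nat.Prime (Nat.count Nat.Prime (i + k)) :=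
      (Nat.nth_le_nth infp).2 h1
    rw [Nat.nth_count hkp] at h2
    omega
  have : a i = N - i := le_antisymm (Nat.sInf_le hmem) (le_csInf ⟨_, hmem⟩ hlb)
  omega

private lemma pc_eq (j i : ℕ) (h1 : Nat.nth Nat.Prime j ≤ i)
    (h2 : i < Nat.nth Nat.Prime (j + 1)) : Nat.primeCounting i = j + 1 := by
  have hlo : Nat.count Nat.Prime (Nat.nth Nat.Prime j + 1) ≤ Nat.count Nat.Prime (i + 1) :=
    Nat.count_monotone _ (by omega)
  have hhi : Nat.count Nat.Prime (i + 1) ≤ Nat.count Nat.Prime (Nat.nth Nat.Prime (j + 1)) :=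
    Nat.count_monotone _ (by omega)
  rw [Nat.count_succ, Nat.count_nth_of_infinite infp, if_pos (Nat.prime_nth_prime _)] at hlo
  rw [Nat.count_nth_of_infinite infp] at hhi
  have : Nat.primeCounting i = Nat.count Nat.Prime (i + 1) := rfl
  omega

private lemma gauss (d : ℕ) (q : ℕ) :
    2 * ∑ i ∈ Finset.Ioc q (q + d), (((q : ℤ) + d) - i) = d * (d - 1) := by
  induction d with
  | zero => simp
  | succ d ih =>
    have h : q + (d + 1) = (q + d) + 1 := by ring
    rw [h, Finset.sum_Ioc_succ_top (by omega)]
    push_cast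
    have h2 : ∑ i ∈ Finset.Ioc q (q + d), (((q : ℤ) + ((d : ℤ) + 1)) - i)
        = (∑ i ∈ Finset.Ioc q (q + d), (((q : ℤ) + d) - i)) + d := by
      rw [show ∑ i ∈ Finset.Ioc q (q + d), (((q : ℤ) + ((d : ℤ) + 1)) - i)
          = ∑ i ∈ Finset.Ioc q (q + d), ((((q : ℤ) + d) - i) + 1) from
        Finset.sum_congr rfl (fun x _ => by ring)]
      rw [Finset.sum_add_distrib, Finset.sum_const, Nat.card_Ioc]
      simp
    rw [h2]
    ring_nf
    ring_nf at ih
    linarith [ih]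

private lemma gauss2 (e q : ℕ) :
    2 * ∑ i ∈ Finset.Ioc q (q + e), (((q : ℤ) + e + 1) - i) = (e + 1) * e := by
  rw [show ∑ i ∈ Finset.Ioc q (q + e), (((q : ℤ) + e + 1) - i)
      = ∑ i ∈ Finset.Ioc q (q + e), ((((q : ℤ) + e) - i) + 1) from
    Finset.sum_congr rfl (fun x _ => by ring)]
  rw [Finset.sum_add_distrib, Finset.sum_const, Nat.card_Ioc]
  simp only [add_tsub_cancel_left, nsmul_eq_mul, mul_one]
  have := gauss e q
  linarith

private lemma a_one : a 1 = 1 := by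
  have hmem : 1 ∈ {k : ℕ | 0 < k ∧ (1 + k).Prime} := ⟨one_pos, by norm_num⟩
  exact le_antisymm (Nat.sInf_le hmem) (le_csInf ⟨_, hmem⟩ fun k hk => hk.1)

private lemma a_two : a 2 = 1 := by
  have hmem : 1 ∈ {k : ℕ | 0 < k ∧ (2 + k).Prime} := ⟨one_pos, by norm_num⟩
  exact le_antisymm (Nat.sInf_le hmem) (le_csInf ⟨_, hmem⟩ fun k hk => hk.1)

private lemma key (j : ℕ) :
    2 * ∑ i ∈ Finset.Icc 1 (Nat.nth Nat.Prime j), (a i : ℤ)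
      = 2 * (Nat.nth Nat.Prime (j + 1) : ℤ) - (Nat.nth Nat.Prime j : ℤ)
        + ∑ k ∈ Finset.range j,
            ((Nat.nth Nat.Prime (k + 1) : ℤ) - (Nat.nth Nat.Prime k : ℤ)) ^ 2 := by
  induction j with
  | zero =>
    rw [Nat.nth_prime_zero_eq_two, Nat.nth_prime_one_eq_three]
    rw [show Finset.Icc 1 2 = {1, 2} from rfl]
    simp [a_one, a_two]
  | succ j ih =>
    set q := Nat.nth Nat.Prime j with hq
    set q' := Nat.nth Nat.Prime (j + 1) with hq'
    set q'' := Nat.nth Nat.Prime (j + 2) with hq''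
    have hqq' : q < q' := (Nat.nth_lt_nth infp).2 (by omega)
    have hq'q'' : q' < q'' := (Nat.nth_lt_nth infp).2 (by omega)
    obtain ⟨e, he⟩ : ∃ e, q' = q + e + 1 := ⟨q' - q - 1, by omega⟩
    -- split Icc 1 q' = Icc 1 q ∪ Ioc q q'
    have hsplit : ∑ i ∈ Finset.Icc 1 q', (a i : ℤ)
        = ∑ i ∈ Finset.Icc 1 q, (a i : ℤ) + ∑ i ∈ Finset.Ioc q q', (a i : ℤ) := by
      rw [show (1 : ℕ) = 0 + 1 from rfl, Finset.Icc_add_one_left_eq_Ioc, Finset.Icc_add_one_left_eq_Ioc,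
        ← Finset.sum_Ioc_consecutive _ (Nat.zero_le q) (le_of_lt hqq')]
    -- split off top of Ioc q q'
    have htop : ∑ i ∈ Finset.Ioc q q', (a i : ℤ)
        = ∑ i ∈ Finset.Ioc q (q + e), (a i : ℤ) + (a q' : ℤ) := by
      rw [he, Finset.sum_Ioc_succ_top (by omega)]
    -- middle values
    have hmid : ∑ i ∈ Finset.Ioc q (q + e), (a i : ℤ)
        = ∑ i ∈ Finset.Ioc q (q + e), (((q : ℤ) + e + 1) - i) := by
      apply Finset.sum_congr rfl
      intro i hi
      simp only [Finset.mem_Ioc] at hi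
      have hpi : Nat.primeCounting i = j + 1 := pc_eq j i (by omega) (by omega)
      have := a_add i
      rw [hpi, ← hq'] at this
      have : (i : ℤ) + a i = (q' : ℤ) := by exact_mod_cast congrArg (Nat.cast : ℕ → ℤ) this
      push_cast [he] at this ⊢
      linarith
    have hmid2 : 2 * ∑ i ∈ Finset.Ioc q (q + e), (a i : ℤ) = (e + 1) * e := by
      rw [hmid]; exact gauss2 e q
    -- a q'
    have haq' : (q' : ℤ) + (a q' : ℤ) = (q'' : ℤ) := by
      have hpq' : Nat.primeCounting q' = j + 2 := by
        apply pc_eq (j + 1) q' le_rfl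
        exact (Nat.nth_lt_nth infp).2 (by omega)
      have := a_add q'
      rw [hpq'] at this
      exact_mod_cast congrArg (Nat.cast : ℕ → ℤ) this
    rw [hsplit, htop, Finset.sum_range_succ]
    have hq'e : (q' : ℤ) = (q : ℤ) + e + 1 := by exact_mod_cast congrArg (Nat.cast : ℕ → ℤ) he
    rw [← hq', ← hq]
    nlinarith [ih, hmid2, haq', hq'e]

theorem stmt_3 : ∀ n : ℕ, n.Prime → 3 ≤ n →
    2 * (∑ i ∈ Finset.Icc 1 n, (a i : ℤ)) =
      2 * (p (Nat.primeCounting n + 1) : ℤ) - (p (Nat.primeCounting n) : ℤ) +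
        ∑ k ∈ Finset.Icc 1 (Nat.primeCounting n - 1), ((p (k + 1) : ℤ) - (p k : ℤ)) ^ 2 := by
  intro n hpn hn3
  set m := Nat.primeCounting n with hm
  have hm1 : m = Nat.count Nat.Prime n + 1 := by
    rw [hm]; unfold Nat.primeCounting Nat.primeCounting'
    rw [Nat.count_succ, if_pos hpn]
  have hnth : Nat.nth Nat.Prime (m - 1) = n := by
    rw [hm1, Nat.add_sub_cancel]; exact Nat.nth_count hpn
  have hp1 : p m = Nat.nth Nat.Prime (m - 1) := rfl
  have hp2 : p (m + 1) = Nat.nth Nat.Prime m := by unfold p; congr 1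
  have hkey := key (m - 1)
  rw [show m - 1 + 1 = m from by omega, hnth] at hkey
  have hsum : ∑ k ∈ Finset.Icc 1 (m - 1), ((p (k + 1) : ℤ) - (p k : ℤ)) ^ 2
      = ∑ k ∈ Finset.range (m - 1),
          ((Nat.nth Nat.Prime (k + 1) : ℤ) - (Nat.nth Nat.Prime k : ℤ)) ^ 2 := by
    rw [show Finset.Icc 1 (m - 1) = Finset.Ico 1 m from by
      rw [← Finset.Ico_add_one_right_eq_Icc]; congr 1; omega]
    rw [Finset.sum_Ico_eq_sum_range]
    apply Finset.sum_congr rfl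
    intro i _
    have e1 : 1 + i + 1 - 1 = i + 1 := by omega
    have e2 : 1 + i - 1 = i := by omega
    unfold p
    rw [e1, e2]
  rw [hp2, hp1, hnth, hsum]
  exact hkey
end

section
/- For every prime n ≥ 3, the product P_{n−1} = Π_{i=1}^{n−1} a_i equals Π_{k=1}^{π(n)−1} (p_{k+1} − p_k)!. -/
open Finset Filter Asymptotics

private lemma a_eq {i P : ℕ} (hP : P.Prime) (hiP : i < P)
    (hgap : ∀ j, i < j → j < P → ¬ j.Prime) : a i = P - i := by
  have hmem : P - i ∈ {k : ℕ | 0 < k ∧ (i + k).Prime} := by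
    constructor
    · omega
    · have : i + (P - i) = P := by omega
      rw [this]; exact hP
  refine le_antisymm (Nat.sInf_le hmem) (le_csInf ⟨_, hmem⟩ ?_)
  rintro k ⟨hk0, hkp⟩
  by_contra h
  exact hgap (i + k) (by omega) (by omega) hkp

private lemma gap {m j : ℕ} (hj : j.Prime) (h : Nat.nth Nat.Prime m < j) :
    Nat.nth Nat.Prime (m + 1) ≤ j := by
  have h1 : m + 1 ≤ Nat.count Nat.Prime j := by
    have := Nat.count_nth_succ_of_infinite Nat.infinite_setOf_prime m
    calc m + 1 = Nat.count Nat.Prime (Nat.nth Nat.Prime m + 1) := this.symm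
      _ ≤ Nat.count Nat.Prime j := Nat.count_monotone _ (by omega)
  calc Nat.nth Nat.Prime (m + 1) ≤ Nat.nth Nat.Prime (Nat.count Nat.Prime j) :=
        (Nat.nth_le_nth Nat.infinite_setOf_prime).2 h1
    _ = j := Nat.nth_count hj

private lemma fact_prod (d : ℕ) : ∀ s : ℕ, ∏ i ∈ Finset.Ico s (s + d), (s + d - i) = d.factorial := by
  induction d with
  | zero => intro s; simp
  | succ d ih =>
    intro s
    rw [Finset.prod_eq_prod_Ico_succ_bot (by omega : s < s + (d+1))]
    have h1 : s + d - s = d := by omega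
    have h2 : ∏ i ∈ Finset.Ico (s+1) (s + (d+1)), (s + (d+1) - i) = d.factorial := by
      have := ih (s + 1)
      have e : s + 1 + d = s + (d + 1) := by omega
      rw [e] at this
      exact this
    rw [h2]
    have : s + (d + 1) - s = d + 1 := by omega
    rw [this, Nat.factorial_succ]

private lemma main (m : ℕ) :
    ∏ i ∈ Finset.Ico 1 (Nat.nth Nat.Prime m), a i =
      ∏ k ∈ Finset.Icc 1 m, Nat.factorial (Nat.nth Nat.Prime k - Nat.nth Nat.Prime (k - 1)) := by
  induction m with
  | zero =>
    rw [Nat.nth_prime_zero_eq_two]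
    simp only [Finset.Icc_self, show Finset.Icc 1 0 = ∅ from rfl]
    rw [show Finset.Ico 1 2 = {1} from rfl]
    simp only [Finset.prod_singleton, Finset.prod_empty]
    have : a 1 = 2 - 1 := a_eq Nat.prime_two (by norm_num) (by omega)
    simpa using this
  | succ m ih =>
    have hmono : Nat.nth Nat.Prime m < Nat.nth Nat.Prime (m + 1) :=
      (Nat.nth_lt_nth Nat.infinite_setOf_prime).2 (Nat.lt_succ_self m)
    have h1 : 1 ≤ Nat.nth Nat.Prime m := (Nat.prime_nth_prime m).one_lt.le
    rw [← Finset.prod_Ico_consecutive _ h1 hmono.le, ih]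
    have hseg : ∏ i ∈ Finset.Ico (Nat.nth Nat.Prime m) (Nat.nth Nat.Prime (m+1)), a i
        = (Nat.nth Nat.Prime (m+1) - Nat.nth Nat.Prime m).factorial := by
      rw [Finset.prod_congr rfl (fun i hi => ?_)]
      · have hd : Nat.nth Nat.Prime m + (Nat.nth Nat.Prime (m+1) - Nat.nth Nat.Prime m)
            = Nat.nth Nat.Prime (m+1) := by omega
        have := fact_prod (Nat.nth Nat.Prime (m+1) - Nat.nth Nat.Prime m) (Nat.nth Nat.Prime m)
        rw [hd] at this
        exact this
      · simp only [Finset.mem_Ico] at hi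
        exact a_eq (Nat.prime_nth_prime (m+1)) hi.2
          (fun j hij hjP hjp => absurd (gap hjp (lt_of_le_of_lt hi.1 hij)) (by omega))
    rw [hseg, Finset.prod_Icc_succ_top (by omega) ]
    simp

theorem stmt_5 : ∀ n : ℕ, n.Prime → 3 ≤ n →
    ∏ i ∈ Finset.Icc 1 (n - 1), a i =
      ∏ k ∈ Finset.Icc 1 (Nat.primeCounting n - 1), Nat.factorial (p (k + 1) - p k) := by
  intro n hn h3
  have hcount : Nat.nth Nat.Prime (Nat.count Nat.Prime n) = n := Nat.nth_count hn
  have hpi : Nat.primeCounting n = Nat.count Nat.Prime n + 1 := by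
    rw [Nat.primeCounting, Nat.primeCounting', Nat.count_succ, if_pos hn]
  set m := Nat.count Nat.Prime n with hm
  have h1 : Finset.Icc 1 (n - 1) = Finset.Ico 1 n := by
    ext x; simp [Finset.mem_Icc, Finset.mem_Ico]; omega
  rw [h1, hpi, ← hcount, main m]
  simp only [Nat.add_sub_cancel]
  refine Finset.prod_congr rfl fun k hk => ?_
  simp only [Finset.mem_Icc] at hk
  congr 1
end

section
/- There exists a constant c > 0 such that for all sufficiently large x, Σ_{n ≤ x} a_n ≥ c · x · log x. -/
open Finset Filter Asymptotics

/-- `phi n` is the number of primes `≤ n`. -/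
def phi (n : ℕ) : ℕ := Nat.count Nat.Prime (n + 1)

lemma a_spec (n : ℕ) : 0 < a n ∧ (n + a n).Prime := by
  have h : {k : ℕ | 0 < k ∧ (n + k).Prime}.Nonempty := by
    obtain ⟨q, hle, hq⟩ := Nat.exists_infinite_primes (n + 1)
    exact ⟨q - n, by omega, by rwa [show n + (q - n) = q by omega]⟩
  exact Nat.sInf_mem h

lemma phi_lt {n m q : ℕ} (hq : q.Prime) (h1 : n < q) (h2 : q ≤ m) : phi n < phi m :=
  calc Nat.count Nat.Prime (n + 1) ≤ Nat.count Nat.Prime q := Nat.count_monotone _ h1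
    _ < Nat.count Nat.Prime (q + 1) := by rw [Nat.count_succ]; simp [hq]
    _ ≤ Nat.count Nat.Prime (m + 1) := Nat.count_monotone _ (by omega)

lemma fiber_le (N n : ℕ) :
    ((Icc 1 N).filter fun m => n ≤ m ∧ phi m = phi n).card ≤ a n := by
  obtain ⟨hpos, hp⟩ := a_spec n
  have hsub : ((Icc 1 N).filter fun m => n ≤ m ∧ phi m = phi n)
      ⊆ Icc n (n + a n - 1) := by
    intro m hm
    simp only [mem_filter, mem_Icc] at hm ⊢
    refine ⟨hm.2.1, ?_⟩
    by_contra hlt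
    push_neg at hlt
    exact (phi_lt hp (by omega) (by omega : n + a n ≤ m)).ne' hm.2.2
  calc _ ≤ (Icc n (n + a n - 1)).card := card_le_card hsub
    _ = a n := by rw [Nat.card_Icc]; omega

lemma key_s7 (N : ℕ) (hN : 1 ≤ N) :
    (N : ℝ) ^ 2 ≤ 2 * (phi N + 1) * ∑ n ∈ Icc 1 N, (a n : ℝ) := by
  classical
  set S := Icc 1 N with hS
  set V := S.image phi with hV
  have hcardS : S.card = N := by rw [hS, Nat.card_Icc]; omega
  have hA : (N : ℝ) = ∑ v ∈ V, ((S.filter fun n => phi n = v).card : ℝ) := by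
    rw [← hcardS, card_eq_sum_card_image phi S]
    push_cast
    rfl
  have hB : (N : ℝ) ^ 2 ≤ V.card * ∑ v ∈ V, ((S.filter fun n => phi n = v).card : ℝ) ^ 2 := by
    rw [hA]; exact sq_sum_le_card_mul_sum_sq
  have hC : ∑ n ∈ S, ((S.filter fun m => phi m = phi n).card : ℝ)
      = ∑ v ∈ V, ((S.filter fun n => phi n = v).card : ℝ) ^ 2 := by
    rw [Finset.sum_comp (fun v => ((S.filter fun m => phi m = v).card : ℝ)) phi]
    refine Finset.sum_congr rfl fun v _ => ?_
    rw [nsmul_eq_mul, sq]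
  have hD : ∀ n ∈ S, (S.filter fun m => phi m = phi n).card
      ≤ (S.filter fun m => n ≤ m ∧ phi m = phi n).card
        + (S.filter fun m => m ≤ n ∧ phi m = phi n).card := by
    intro n _
    have hsub : (S.filter fun m => phi m = phi n)
        ⊆ (S.filter fun m => n ≤ m ∧ phi m = phi n)
          ∪ (S.filter fun m => m ≤ n ∧ phi m = phi n) := by
      intro m hm
      simp only [mem_filter, mem_union] at hm ⊢
      rcases le_total n m with h | h
      · exact Or.inl ⟨hm.1, h, hm.2⟩
      · exact Or.inr ⟨hm.1, h, hm.2⟩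
    exact (card_le_card hsub).trans (card_union_le _ _)
  have hE : ∑ n ∈ S, (S.filter fun m => m ≤ n ∧ phi m = phi n).card
      = ∑ n ∈ S, (S.filter fun m => n ≤ m ∧ phi m = phi n).card := by
    simp_rw [Finset.card_filter]
    rw [Finset.sum_comm]
    refine Finset.sum_congr rfl fun n _ => Finset.sum_congr rfl fun m _ => ?_
    refine if_congr ?_ rfl rfl
    exact and_congr Iff.rfl eq_comm
  have hF : ∑ n ∈ S, (S.filter fun m => phi m = phi n).card ≤ 2 * ∑ n ∈ S, a n :=
    calc ∑ n ∈ S, (S.filter fun m => phi m = phi n).card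
        ≤ ∑ n ∈ S, ((S.filter fun m => n ≤ m ∧ phi m = phi n).card
          + (S.filter fun m => m ≤ n ∧ phi m = phi n).card) := Finset.sum_le_sum hD
      _ = 2 * ∑ n ∈ S, (S.filter fun m => n ≤ m ∧ phi m = phi n).card := by
          rw [Finset.sum_add_distrib, hE]; ring
      _ ≤ 2 * ∑ n ∈ S, a n := by
          refine Nat.mul_le_mul_left 2 (Finset.sum_le_sum fun n _ => fiber_le N n)
  have hVcard : V.card ≤ phi N + 1 := by
    have hsub : V ⊆ range (phi N + 1) := by
      intro v hv
      obtain ⟨n, hn, rfl⟩ := Finset.mem_image.mp hv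
      have hn' : n ≤ N := (Finset.mem_Icc.mp hn).2
      have : phi n ≤ phi N := Nat.count_monotone _ (by omega)
      exact Finset.mem_range.mpr (by omega)
    exact (card_le_card hsub).trans_eq (card_range _)
  have hF' : ∑ n ∈ S, ((S.filter fun m => phi m = phi n).card : ℝ)
      ≤ 2 * ∑ n ∈ S, (a n : ℝ) := by
    have := hF
    exact_mod_cast Nat.cast_le.mpr hF
  have hsum0 : (0 : ℝ) ≤ ∑ n ∈ S, ((S.filter fun m => phi m = phi n).card : ℝ) :=
    Finset.sum_nonneg fun _ _ => by positivity
  calc (N : ℝ) ^ 2 ≤ V.card * ∑ v ∈ V, ((S.filter fun n => phi n = v).card : ℝ) ^ 2 := hB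
    _ = V.card * ∑ n ∈ S, ((S.filter fun m => phi m = phi n).card : ℝ) := by rw [hC]
    _ ≤ (phi N + 1 : ℝ) * ∑ n ∈ S, ((S.filter fun m => phi m = phi n).card : ℝ) := by
        apply mul_le_mul_of_nonneg_right _ hsum0
        exact_mod_cast hVcard
    _ ≤ (phi N + 1 : ℝ) * (2 * ∑ n ∈ S, (a n : ℝ)) := by
        apply mul_le_mul_of_nonneg_left hF' (by positivity)
    _ = 2 * (phi N + 1) * ∑ n ∈ S, (a n : ℝ) := by ring

lemma cheb (N : ℕ) (hN : 1 ≤ N) :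
    (phi N + 1 : ℝ) * Real.log N ≤ 22 * N := by
  classical
  set m := Nat.sqrt N with hm
  have hm1 : 1 ≤ m := Nat.sqrt_pos.mpr hN
  set P := (Ioc m N).filter Nat.Prime with hP
  set t := P.card with ht
  have hphi : phi N ≤ m + 1 + t := by
    have hsub : (range (N + 1)).filter Nat.Prime
        ⊆ ((range (m + 1)).filter Nat.Prime) ∪ P := by
      intro q hq
      simp only [mem_filter, mem_range, mem_union, mem_Ioc, hP] at hq ⊢
      rcases le_or_gt q m with h | h
      · exact Or.inl ⟨by omega, hq.2⟩
      · exact Or.inr ⟨⟨h, by omega⟩, hq.2⟩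
    calc phi N = ((range (N + 1)).filter Nat.Prime).card := by
          rw [phi, Nat.count_eq_card_filter_range]
      _ ≤ (((range (m + 1)).filter Nat.Prime) ∪ P).card := card_le_card hsub
      _ ≤ ((range (m + 1)).filter Nat.Prime).card + t := card_union_le _ _
      _ ≤ (m + 1) + t := by
          have := (card_filter_le (range (m + 1)) Nat.Prime).trans_eq (card_range (m + 1))
          omega
  have hpow : (m + 1) ^ t ≤ 4 ^ N := by
    have h1 : (m + 1) ^ t ≤ ∏ q ∈ P, q := by
      apply Finset.pow_card_le_prod
      intro q hq
      simp only [hP, mem_filter, mem_Ioc] at hq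
      omega
    have h2 : (∏ q ∈ P, q) ∣ primorial N := by
      apply Finset.prod_dvd_prod_of_subset
      intro q hq
      simp only [hP, mem_filter, mem_Ioc, primorial, mem_range] at hq ⊢
      exact ⟨by omega, hq.2⟩
    exact h1.trans ((Nat.le_of_dvd (primorial_pos N) h2).trans (primorial_le_4_pow N))
  have hlog1 : (t : ℝ) * Real.log (m + 1) ≤ N * Real.log 4 := by
    have hc : ((m + 1 : ℕ) : ℝ) ^ t ≤ ((4 : ℕ) : ℝ) ^ N := by exact_mod_cast hpow
    have := Real.log_le_log (by positivity) hc
    rw [Real.log_pow, Real.log_pow] at this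
    push_cast at this ⊢
    convert this using 3
  have hlogN : Real.log N ≤ 2 * Real.log (m + 1) := by
    have h1 : (N : ℝ) ≤ ((m : ℝ) + 1) ^ 2 := by
      have := (Nat.lt_succ_sqrt' N).le
      exact_mod_cast this
    calc Real.log N ≤ Real.log (((m : ℝ) + 1) ^ 2) :=
          Real.log_le_log (by exact_mod_cast hN) h1
      _ = 2 * Real.log (m + 1) := by rw [Real.log_pow]; push_cast; ring
  have hlog4 : Real.log 4 ≤ 3 := by
    have := Real.log_le_sub_one_of_pos (by norm_num : (0 : ℝ) < 4); linarith
  have hlogm : Real.log ((m : ℝ) + 1) ≤ m := by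
    have := Real.log_le_sub_one_of_pos (show (0 : ℝ) < (m : ℝ) + 1 by positivity)
    linarith
  have hlogm0 : 0 ≤ Real.log ((m : ℝ) + 1) := Real.log_nonneg (by linarith [show (0:ℝ) ≤ (m:ℝ) from Nat.cast_nonneg m])
  have ht' : (t : ℝ) * Real.log N ≤ 6 * N := by
    have hNc : (0 : ℝ) ≤ N := Nat.cast_nonneg N
    calc (t : ℝ) * Real.log N ≤ (t : ℝ) * (2 * Real.log (m + 1)) :=
          mul_le_mul_of_nonneg_left hlogN (Nat.cast_nonneg t)
      _ = 2 * ((t : ℝ) * Real.log (m + 1)) := by ring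
      _ ≤ 2 * ((N : ℝ) * Real.log 4) := by linarith
      _ ≤ 6 * N := by nlinarith
  have hmm : (m : ℝ) * m ≤ N := by exact_mod_cast Nat.sqrt_le N
  have hmN : (m : ℝ) ≤ N := by exact_mod_cast Nat.sqrt_le_self N
  have hm' : ((m : ℝ) + 2) * Real.log N ≤ 16 * N := by
    calc ((m : ℝ) + 2) * Real.log N ≤ ((m : ℝ) + 2) * (2 * Real.log (m + 1)) :=
          mul_le_mul_of_nonneg_left hlogN (by positivity)
      _ ≤ ((m : ℝ) + 2) * (2 * m) := by
          apply mul_le_mul_of_nonneg_left _ (by positivity)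
          linarith
      _ ≤ 16 * N := by nlinarith
  have hphi' : (phi N + 1 : ℝ) ≤ ((m : ℝ) + 2) + t := by
    have : (phi N : ℝ) ≤ (m : ℝ) + 1 + t := by exact_mod_cast hphi
    linarith
  have hlogN0 : 0 ≤ Real.log N := Real.log_nonneg (by exact_mod_cast hN)
  calc (phi N + 1 : ℝ) * Real.log N ≤ (((m : ℝ) + 2) + t) * Real.log N :=
        mul_le_mul_of_nonneg_right hphi' hlogN0
    _ = ((m : ℝ) + 2) * Real.log N + t * Real.log N := by ring
    _ ≤ 16 * N + 6 * N := by linarith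
    _ = 22 * N := by ring

lemma main_nat (N : ℕ) (hN : 1 ≤ N) :
    (N : ℝ) * Real.log N ≤ 44 * ∑ n ∈ Icc 1 N, (a n : ℝ) := by
  have hkey := key_s7 N hN
  have hcheb := cheb N hN
  have hsum0 : (0 : ℝ) ≤ ∑ n ∈ Icc 1 N, (a n : ℝ) :=
    Finset.sum_nonneg fun _ _ => by positivity
  have hlog0 : 0 ≤ Real.log N := Real.log_nonneg (by exact_mod_cast hN)
  have hN0 : (0 : ℝ) < N := by exact_mod_cast hN
  have h1 : (N : ℝ) * ((N : ℝ) * Real.log N)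
      ≤ (N : ℝ) * (44 * ∑ n ∈ Icc 1 N, (a n : ℝ)) := by
    calc (N : ℝ) * ((N : ℝ) * Real.log N) = (N : ℝ) ^ 2 * Real.log N := by ring
      _ ≤ (2 * (phi N + 1) * ∑ n ∈ Icc 1 N, (a n : ℝ)) * Real.log N :=
          mul_le_mul_of_nonneg_right hkey hlog0
      _ = 2 * ((phi N + 1 : ℝ) * Real.log N) * ∑ n ∈ Icc 1 N, (a n : ℝ) := by ring
      _ ≤ 2 * (22 * N) * ∑ n ∈ Icc 1 N, (a n : ℝ) := by
          apply mul_le_mul_of_nonneg_right _ hsum0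
          linarith
      _ = (N : ℝ) * (44 * ∑ n ∈ Icc 1 N, (a n : ℝ)) := by ring
  exact le_of_mul_le_mul_left h1 hN0

theorem stmt_7 : ∃ c : ℝ, 0 < c ∧ ∀ᶠ x : ℝ in atTop,
    c * x * Real.log x ≤ ∑ n ∈ Finset.Icc 1 ⌊x⌋₊, (a n : ℝ) := by
  refine ⟨1 / 176, by norm_num, ?_⟩
  filter_upwards [eventually_ge_atTop (4 : ℝ)] with x hx
  set N := ⌊x⌋₊ with hNdef
  have hN4 : 4 ≤ N := Nat.le_floor (by exact_mod_cast hx)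
  have hN1 : 1 ≤ N := by omega
  have hNx : (N : ℝ) ≤ x := Nat.floor_le (by linarith)
  have hxN : x ≤ 2 * N := by
    have h1 : x - 1 < N := Nat.sub_one_lt_floor x
    have h2 : (1 : ℝ) ≤ N := by exact_mod_cast hN1
    linarith
  have hlogx : Real.log x ≤ 2 * Real.log N := by
    have hx2 : x ≤ ((N : ℝ)) ^ 2 := by
      have h2 : (2 : ℝ) ≤ N := by exact_mod_cast (by omega : 2 ≤ N)
      nlinarith
    calc Real.log x ≤ Real.log (((N : ℝ)) ^ 2) := Real.log_le_log (by linarith) hx2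
      _ = 2 * Real.log N := by rw [Real.log_pow]; push_cast; ring
  have hlogx0 : 0 ≤ Real.log x := Real.log_nonneg (by linarith)
  have hlogN0 : 0 ≤ Real.log N := Real.log_nonneg (by exact_mod_cast hN1)
  have hmain := main_nat N hN1
  have h1 : x * Real.log x ≤ 2 * (N : ℝ) * (2 * Real.log N) := by
    apply mul_le_mul hxN hlogx hlogx0 (by positivity)
  have h2 : x * Real.log x ≤ 176 * ∑ n ∈ Icc 1 N, (a n : ℝ) := by
    calc x * Real.log x ≤ 2 * (N : ℝ) * (2 * Real.log N) := h1
      _ = 4 * ((N : ℝ) * Real.log N) := by ring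
      _ ≤ 4 * (44 * ∑ n ∈ Icc 1 N, (a n : ℝ)) := by linarith
      _ = 176 * ∑ n ∈ Icc 1 N, (a n : ℝ) := by ring
  linarith
end

section
/- Assume that Σ_{p_n ≤ x} (p_{n+1} − p_n)^2 ≪ x (log x)^3. Then Σ_{n ≤ x} a_n ≪ x (log x)^3. -/
open Finset Filter Asymptotics

lemma a_le {n m : ℕ} (hm : 0 < m) (hp : (n + m).Prime) : a n ≤ m :=
  Nat.sInf_le ⟨hm, hp⟩

lemma p_mono : ∀ {j k : ℕ}, j ≤ k → p j ≤ p k := fun h =>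
  Nat.nth_monotone Nat.infinite_setOf_prime (Nat.sub_le_sub_right h 1)

/-- Key combinatorial inequality, in ℕ. -/
lemma key_s10 (N : ℕ) :
    ∑ n ∈ Finset.Icc 1 N, a n ≤
      1 + ∑ k ∈ Finset.Icc 1 (Nat.primeCounting N), (p (k + 1) - p k) ^ 2 := by
  rcases Nat.eq_zero_or_pos N with rfl | hN
  · simp
  have hIcc : Finset.Icc 1 N = insert 1 (Finset.Icc 2 N) := by
    ext m; simp only [Finset.mem_Icc, Finset.mem_insert]; omega
  rw [hIcc, Finset.sum_insert (by simp)]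
  have ha1 : a 1 ≤ 1 := a_le one_pos (by norm_num)
  have hmaps : ∀ n ∈ Finset.Icc 2 N, Nat.primeCounting n ∈
      Finset.Icc 1 (Nat.primeCounting N) := by
    intro n hn
    rw [Finset.mem_Icc] at hn ⊢
    constructor
    · rcases Nat.eq_zero_or_pos (Nat.primeCounting n) with h0 | h0
      · rw [Nat.primeCounting_eq_zero_iff] at h0; omega
      · exact h0
    · exact Nat.monotone_primeCounting hn.2
  have hsum2 : ∑ n ∈ Finset.Icc 2 N, a n ≤
      ∑ k ∈ Finset.Icc 1 (Nat.primeCounting N), (p (k + 1) - p k) ^ 2 := by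
    rw [← Finset.sum_fiberwise_of_maps_to hmaps (fun n => a n)]
    apply Finset.sum_le_sum
    intro k hk
    rw [Finset.mem_Icc] at hk
    have hk1 : 1 ≤ k := hk.1
    set g := p (k + 1) - p k with hg
    have hpk1 : p (k + 1) = Nat.nth Nat.Prime k := by simp [p]
    -- facts about elements of the fiber
    have hfiber : ∀ n ∈ (Finset.Icc 2 N).filter (fun n => Nat.primeCounting n = k),
        p k ≤ n ∧ n < p (k + 1) := by
      intro n hn
      rw [Finset.mem_filter, Finset.mem_Icc] at hn
      obtain ⟨⟨hn2, hnN⟩, hπ⟩ := hn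
      have hcount : Nat.count Nat.Prime (n + 1) = k := hπ
      have hlt : k - 1 < Nat.count Nat.Prime (n + 1) := by omega
      constructor
      · -- p k = nth (k-1) ≤ n since k-1 < count (n+1)
        have h2 : Nat.nth Nat.Prime (k - 1) < n + 1 :=
          (Nat.lt_nth_iff_count_lt Nat.infinite_setOf_prime
            (a := k - 1) (b := n + 1)).mp hlt
        have : p k = Nat.nth Nat.Prime (k - 1) := rfl
        omega
      · have h3 : n + 1 ≤ Nat.nth Nat.Prime (Nat.count Nat.Prime (n + 1)) :=
          Nat.le_nth_count Nat.infinite_setOf_prime (n + 1)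
        rw [hcount] at h3
        omega
    have hcard : ((Finset.Icc 2 N).filter (fun n => Nat.primeCounting n = k)).card ≤ g := by
      have hsub : (Finset.Icc 2 N).filter (fun n => Nat.primeCounting n = k) ⊆
          Finset.Ico (p k) (p (k + 1)) := by
        intro n hn
        rw [Finset.mem_Ico]
        exact hfiber n hn
      calc _ ≤ (Finset.Ico (p k) (p (k + 1))).card := Finset.card_le_card hsub
        _ = g := by rw [Nat.card_Ico]
    have hterm : ∀ n ∈ (Finset.Icc 2 N).filter (fun n => Nat.primeCounting n = k),
        a n ≤ g := by
      intro n hn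
      obtain ⟨h1, h2⟩ := hfiber n hn
      have hprime : (n + (p (k + 1) - n)).Prime := by
        have : n + (p (k + 1) - n) = p (k + 1) := by omega
        rw [this, hpk1]
        exact Nat.prime_nth_prime k
      calc a n ≤ p (k + 1) - n := a_le (by omega) hprime
        _ ≤ g := by omega
    calc ∑ n ∈ (Finset.Icc 2 N).filter (fun n => Nat.primeCounting n = k), a n
        ≤ ((Finset.Icc 2 N).filter (fun n => Nat.primeCounting n = k)).card • g :=
          Finset.sum_le_card_nsmul _ _ _ hterm
      _ ≤ g * g := by
          rw [smul_eq_mul]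
          exact Nat.mul_le_mul_right g hcard
      _ = g ^ 2 := (sq g).symm
  omega

theorem stmt_10
    (h : ∃ C : ℝ, 0 < C ∧ ∀ᶠ x : ℝ in atTop,
      ∑ n ∈ Finset.Icc 1 (Nat.primeCounting ⌊x⌋₊), ((p (n + 1) : ℝ) - (p n : ℝ)) ^ 2 ≤
        C * x * Real.log x ^ 3) :
    ∃ C : ℝ, 0 < C ∧ ∀ᶠ x : ℝ in atTop,
      ∑ n ∈ Finset.Icc 1 ⌊x⌋₊, (a n : ℝ) ≤ C * x * Real.log x ^ 3 := by
  obtain ⟨C, hC, hev⟩ := h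
  refine ⟨C + 1, by linarith, ?_⟩
  filter_upwards [hev, eventually_ge_atTop (3 : ℝ)] with x hx hx3
  set N := ⌊x⌋₊ with hNdef
  have hlog : (1 : ℝ) ≤ Real.log x := by
    rw [Real.le_log_iff_exp_le (by linarith)]
    calc Real.exp 1 ≤ 2.7182818286 := Real.exp_one_lt_d9.le
      _ ≤ x := by linarith
  have hx1 : (1 : ℝ) ≤ x := by linarith
  have h1 : (1 : ℝ) ≤ x * Real.log x ^ 3 := by
    have : (1:ℝ) ≤ Real.log x ^ 3 := one_le_pow₀ hlog
    nlinarith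
  -- cast the key lemma
  have hcast : ∑ n ∈ Finset.Icc 1 N, (a n : ℝ) ≤
      1 + ∑ k ∈ Finset.Icc 1 (Nat.primeCounting N), ((p (k + 1) : ℝ) - (p k : ℝ)) ^ 2 := by
    have hk := key_s10 N
    have := Nat.cast_le (α := ℝ).mpr hk
    push_cast at this
    refine this.trans (le_of_eq ?_)
    congr 1
    apply Finset.sum_congr rfl
    intro k hk
    rw [Finset.mem_Icc] at hk
    rw [Nat.cast_sub (p_mono (Nat.le_succ k))]
  calc ∑ n ∈ Finset.Icc 1 N, (a n : ℝ)
      ≤ 1 + ∑ k ∈ Finset.Icc 1 (Nat.primeCounting N), ((p (k + 1) : ℝ) - (p k : ℝ)) ^ 2 := hcast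
    _ ≤ 1 + C * x * Real.log x ^ 3 := by linarith [hx]
    _ ≤ (C + 1) * x * Real.log x ^ 3 := by nlinarith
end

section
/- There exists a constant c > 0 such that for all sufficiently large x, Σ_{n ≤ x} log a_n ≥ c · x. -/
open Finset Filter Asymptotics

lemma a_set_nonempty (n : ℕ) : {k : ℕ | 0 < k ∧ (n + k).Prime}.Nonempty := by
  obtain ⟨q, hq, hqp⟩ := Nat.exists_infinite_primes (n + 1)
  exact ⟨q - n, by omega, by rwa [show n + (q - n) = q by omega]⟩

lemma two_le_a {n : ℕ} (h : ¬ (n + 1).Prime) : 2 ≤ a n := by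
  have hm : 0 < a n ∧ (n + a n).Prime := Nat.sInf_mem (a_set_nonempty n)
  rcases Nat.lt_or_ge (a n) 2 with hlt | hge
  · exfalso
    have h1 : a n = 1 := by omega
    rw [h1] at hm
    exact h hm.2
  · exact hge

lemma two_le_a_odd {k : ℕ} (hk : 1 ≤ k) : 2 ≤ a (2 * k + 1) := by
  apply two_le_a
  intro hp
  have : (2 * k + 1 + 1) = 2 * (k + 1) := by ring
  rw [this] at hp
  exact Nat.not_prime_mul (by omega) (by omega) hp

theorem stmt_18 : ∃ c : ℝ, 0 < c ∧ ∀ᶠ x : ℝ in atTop,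
    c * x ≤ ∑ n ∈ Finset.Icc 1 ⌊x⌋₊, Real.log (a n) := by
  refine ⟨Real.log 2 / 8, by positivity, ?_⟩
  filter_upwards [eventually_ge_atTop (10:ℝ)] with x hx
  set N := ⌊x⌋₊ with hNdef
  have hN10 : 10 ≤ N := Nat.le_floor (by exact_mod_cast hx)
  set K := (N - 1) / 2 with hKdef
  have hxN : x < N + 1 := Nat.lt_floor_add_one x
  have h2K : (N : ℝ) ≤ 2 * K + 2 := by
    exact_mod_cast (show N ≤ 2 * K + 2 by omega)
  -- the image of k ↦ 2k+1
  have hinj : Set.InjOn (fun k => 2 * k + 1) (Finset.Icc 1 K) := by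
    intro u _ v _ h
    simp only at h
    omega
  have hsub : (Finset.Icc 1 K).image (fun k => 2 * k + 1) ⊆ Finset.Icc 1 N := by
    intro n hn
    simp only [Finset.mem_image, Finset.mem_Icc] at hn ⊢
    obtain ⟨k, ⟨hk1, hk2⟩, rfl⟩ := hn
    omega
  have step1 : Real.log 2 * K ≤ ∑ n ∈ (Finset.Icc 1 K).image (fun k => 2 * k + 1),
      Real.log (a n) := by
    rw [Finset.sum_image (fun a ha b hb h => hinj ha hb h)]
    calc Real.log 2 * K = ∑ _k ∈ Finset.Icc 1 K, Real.log 2 := by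
          rw [Finset.sum_const, Nat.card_Icc]
          simp [mul_comm]
      _ ≤ ∑ k ∈ Finset.Icc 1 K, Real.log (a (2 * k + 1)) := by
          apply Finset.sum_le_sum
          intro k hk
          have hk1 : 1 ≤ k := (Finset.mem_Icc.mp hk).1
          apply Real.log_le_log (by norm_num)
          exact_mod_cast two_le_a_odd hk1
  have step2 : ∑ n ∈ (Finset.Icc 1 K).image (fun k => 2 * k + 1), Real.log (a n)
      ≤ ∑ n ∈ Finset.Icc 1 N, Real.log (a n) := by
    apply Finset.sum_le_sum_of_subset_of_nonneg hsub
    intro n _ _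
    rcases Nat.eq_zero_or_pos (a n) with h | h
    · simp [h]
    · exact Real.log_natCast_nonneg _
  have hlog2 : (0:ℝ) < Real.log 2 := Real.log_pos (by norm_num)
  have hx8K : x ≤ 8 * K := by
    have hNx : x - 1 ≤ N := by linarith
    nlinarith
  calc Real.log 2 / 8 * x ≤ Real.log 2 / 8 * (8 * K) := by
        apply mul_le_mul_of_nonneg_left hx8K (by positivity)
    _ = Real.log 2 * K := by ring
    _ ≤ _ := le_trans step1 step2
end

section
/- For all integers k ≥ 2, Σ_{i=2}^{k−1} d_i · log d_i > (log 3)·p_k − 2·log(3/2)·k − 3·log 3, where d_i = p_{i+1} − p_i and p_i is the i-th prime. -/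
open Finset Filter Asymptotics

lemma p_mono_s19 {i j : ℕ} (h : i < j) (hi : 1 ≤ i) : p i < p j := by
  unfold p
  exact (Nat.nth_lt_nth Nat.infinite_setOf_prime).2 (by omega)

lemma p_gap {i : ℕ} (hi : 2 ≤ i) : p i + 2 ≤ p (i + 1) := by
  have hq : (p i).Prime := Nat.prime_nth_prime _
  have hr : (p (i + 1)).Prime := Nat.prime_nth_prime _
  have h2 : 2 < p i := by
    have : p 1 < p i := p_mono_s19 (by omega) le_rfl
    unfold p at this
    simpa [p] using this
  have hlt : p i < p (i + 1) := p_mono_s19 (by omega) (by omega)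
  have hoq : Odd (p i) := hq.odd_of_ne_two (by omega)
  have hor : Odd (p (i + 1)) := hr.odd_of_ne_two (by omega)
  have hev : Even (p (i + 1) - p i) := Nat.Odd.sub_odd hor hoq
  obtain ⟨c, hc⟩ := hev
  omega

lemma tel : ∀ k : ℕ, 2 ≤ k →
    ∑ i ∈ Finset.Icc 2 (k - 1), ((p (i + 1) : ℝ) - (p i : ℝ)) = (p k : ℝ) - 3 := by
  intro k hk
  induction k with
  | zero => omega
  | succ n ih =>
    rcases Nat.lt_or_ge n 2 with h | h
    · interval_cases n
      · omega
      · simp [p]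
    · have hn1 : n + 1 - 1 = n := by omega
      have hn2 : n - 1 + 1 = n := by omega
      rw [hn1, ← hn2, Finset.sum_Icc_succ_top (by omega), ih h, hn2]
      ring

lemma ptwise (d : ℕ) (hd : 2 ≤ d) :
    Real.log 3 * d - 2 * Real.log (3 / 2) ≤ (d : ℝ) * Real.log d := by
  rcases eq_or_lt_of_le hd with h | h
  · subst h
    have : Real.log (3 / 2) = Real.log 3 - Real.log 2 := by
      rw [Real.log_div (by norm_num) (by norm_num)]
    push_cast
    rw [this]
    linarith
  · have h3 : (3 : ℝ) ≤ (d : ℝ) := by exact_mod_cast h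
    have hlog : Real.log 3 ≤ Real.log d := Real.log_le_log (by norm_num) h3
    have h1 : (d : ℝ) * Real.log 3 ≤ (d : ℝ) * Real.log d :=
      mul_le_mul_of_nonneg_left hlog (by positivity)
    have h2 : (0 : ℝ) ≤ Real.log (3 / 2) := Real.log_nonneg (by norm_num)
    nlinarith

theorem stmt_19 : ∀ k : ℕ, 2 ≤ k →
    ∑ i ∈ Finset.Icc 2 (k - 1), ((p (i + 1) : ℝ) - (p i : ℝ)) * Real.log ((p (i + 1) : ℝ) - (p i : ℝ)) >
      Real.log 3 * (p k : ℝ) - 2 * Real.log (3 / 2) * k - 3 * Real.log 3 := by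
  intro k hk
  have key : ∀ i ∈ Finset.Icc 2 (k - 1),
      Real.log 3 * ((p (i + 1) : ℝ) - (p i : ℝ)) - 2 * Real.log (3 / 2) ≤
        ((p (i + 1) : ℝ) - (p i : ℝ)) * Real.log ((p (i + 1) : ℝ) - (p i : ℝ)) := by
    intro i hi
    simp only [Finset.mem_Icc] at hi
    have hgap := p_gap hi.1
    have hcast : ((p (i + 1) : ℝ)) - (p i : ℝ) = ((p (i + 1) - p i : ℕ) : ℝ) := by
      rw [Nat.cast_sub (by omega)]
    rw [hcast]
    exact ptwise _ (by omega)
  have hsum := Finset.sum_le_sum key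
  rw [Finset.sum_sub_distrib, ← Finset.mul_sum, tel k hk, Finset.sum_const,
    Nat.card_Icc] at hsum
  have hcard : ((k - 1 + 1 - 2 : ℕ) : ℝ) = (k : ℝ) - 2 := by
    have : k - 1 + 1 - 2 = k - 2 := by omega
    rw [this, Nat.cast_sub hk]; norm_num
  rw [nsmul_eq_mul, hcard] at hsum
  have hL : (0 : ℝ) < Real.log (3 / 2) := Real.log_pos (by norm_num)
  have := hsum
  nlinarith [hL]
end
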